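/- In any Coxeter group, the Möbius function of the Bruhat order satisfies μ(u,v) = (-1)^(ℓ(v)-ℓ(u)) for all u ≤ v. -/

import Mathlib

open Polynomial

variable {B W : Type*} [Group W] {M : CoxeterMatrix B}

namespace CoxeterSystem

open List

variable (cs : CoxeterSystem M W)

local prefix:100 "s" => cs.simple
local prefix:100 "π" => cs.wordProd
local prefix:100 "ℓ" => cs.length

lemma conj_eq_iff' {W : Type*} [Group W] (g x y : W) : g⁻¹ * x * g = y ↔ x = g * y * g⁻¹ := by
  constructor <;> intro h
  · rw [← h]; group
  · rw [h]; group

lemma simple_conj_conj (i : B) (x : W) : s i * (s i * x * s i) * s i = x := by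
  simp only [← mul_assoc, cs.simple_mul_simple_self, one_mul,
    cs.simple_mul_simple_cancel_right]

lemma simple_conj_eq_iff (i : B) (x y : W) : s i * x * s i = y ↔ x = s i * y * s i := by
  constructor <;> intro h
  · rw [← h, cs.simple_conj_conj]
  · rw [h, cs.simple_conj_conj]

lemma conj_eq_simple_iff (i : B) (x : W) : s i * x * s i = s i ↔ x = s i := by
  rw [cs.simple_conj_eq_iff, cs.simple_mul_simple_cancel_right]

open scoped Classical in
lemma eta_involutive (i : B) : Function.Involutive
    (fun p : W × ℤˣ => (s i * p.1 * s i, if p.1 = s i then -p.2 else p.2)) := by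
  intro ⟨x, ε⟩
  simp only [Prod.mk.injEq]
  refine ⟨cs.simple_conj_conj i x, ?_⟩
  by_cases hx : x = s i
  · simp [hx, cs.conj_eq_simple_iff]
  · simp [hx, (cs.conj_eq_simple_iff i x).not.mpr hx]

open scoped Classical in
/-- The sign-tracking permutation associated to a simple reflection. -/
noncomputable def eta (i : B) : Equiv.Perm (W × ℤˣ) :=
  Function.Involutive.toPerm _ (cs.eta_involutive i)

open scoped Classical in
lemma eta_apply (i : B) (p : W × ℤˣ) :
    cs.eta i p = (s i * p.1 * s i, if p.1 = s i then -p.2 else p.2) := rfl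

open scoped Classical in
lemma eta_mul_eta_pow (i j : B) (k : ℕ) (t : W) (ε : ℤˣ) :
    ((cs.eta i * cs.eta j) ^ k) (t, ε) =
      (((s j * s i) ^ k)⁻¹ * t * (s j * s i) ^ k,
        ε * ∏ n ∈ Finset.range (2 * k),
          (if t = (s j * s i) ^ n * s j then (-1 : ℤˣ) else 1)) := by
  have hab : ∀ m : ℕ, ((s j * s i) ^ m)⁻¹ = (s i * s j) ^ m := by
    intro m
    rw [← inv_pow, mul_inv_rev, cs.inv_simple, cs.inv_simple]
  have hsj : ∀ m : ℕ, s j * (s i * s j) ^ m = (s j * s i) ^ m * s j := by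
    intro m
    induction m with
    | zero => simp
    | succ m ih =>
      calc s j * (s i * s j) ^ (m + 1) = s j * (s i * s j) ^ m * (s i * s j) := by
            rw [pow_succ, ← mul_assoc]
        _ = (s j * s i) ^ m * (s j * (s i * s j)) := by rw [ih, mul_assoc]
        _ = (s j * s i) ^ (m + 1) * s j := by
            rw [pow_succ, mul_assoc, mul_assoc]
  have hkey : ∀ m : ℕ, (s j * s i) ^ m * s j * ((s j * s i) ^ m)⁻¹
      = (s j * s i) ^ (2 * m) * s j := by
    intro m
    rw [two_mul, pow_add, mul_assoc ((s j * s i) ^ m), hab m, mul_assoc, hsj m, ← mul_assoc]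
  have hkey2 : ∀ m : ℕ, (s j * s i) ^ m * (s j * s i * s j) * ((s j * s i) ^ m)⁻¹
      = (s j * s i) ^ (2 * m + 1) * s j := by
    intro m
    calc (s j * s i) ^ m * (s j * s i * s j) * ((s j * s i) ^ m)⁻¹
        = (s j * s i) ^ (m + 1) * (s j * ((s j * s i) ^ m)⁻¹) := by
          rw [pow_succ]
          simp only [mul_assoc]
      _ = (s j * s i) ^ (m + 1) * ((s j * s i) ^ m * s j) := by rw [hab m, hsj m]
      _ = (s j * s i) ^ (2 * m + 1) * s j := by
          rw [← mul_assoc, ← pow_add]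
          congr 2
          omega
  induction k with
  | zero => simp
  | succ k ih =>
    rw [pow_succ', Equiv.Perm.mul_apply, ih]
    rw [Equiv.Perm.mul_apply, cs.eta_apply, cs.eta_apply]
    simp only [Prod.mk.injEq]
    set b := s j * s i with hb
    constructor
    · -- first components
      show s i * (s j * ((b ^ k)⁻¹ * t * b ^ k) * s j) * s i = (b ^ (k+1))⁻¹ * t * b ^ (k+1)
      rw [pow_succ, mul_inv_rev, hb]
      rw [mul_inv_rev, cs.inv_simple, cs.inv_simple]
      simp only [← mul_assoc]
    · -- second components
      have c1 : (b ^ k)⁻¹ * t * b ^ k = s j ↔ t = b ^ (2 * k) * s j := by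
        rw [conj_eq_iff', hkey]
      have c2 : s j * ((b ^ k)⁻¹ * t * b ^ k) * s j = s i ↔ t = b ^ (2 * k + 1) * s j := by
        rw [cs.simple_conj_eq_iff, conj_eq_iff', hkey2]
      have h2k : 2 * (k + 1) = 2 * k + 1 + 1 := by ring
      rw [h2k, Finset.prod_range_succ, Finset.prod_range_succ]
      simp only [c1, c2]
      split_ifs <;> simp [mul_comm, mul_left_comm, mul_assoc]

end CoxeterSystem

namespace CoxeterSystem2  -- scratch marker
end CoxeterSystem2

namespace CoxeterSystem

open scoped Classical in
lemma eta_liftable (cs : CoxeterSystem M W) : M.IsLiftable cs.eta := by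
  intro i j
  have hm : (cs.simple j * cs.simple i) ^ M i j = 1 := cs.simple_mul_simple_pow' i j
  have hm' : (cs.simple i * cs.simple j) ^ M i j = 1 := cs.simple_mul_simple_pow i j
  refine Equiv.ext fun p => ?_
  obtain ⟨t, ε⟩ := p
  have hprod : (∏ n ∈ Finset.range (2 * M i j),
      (if t = (cs.simple j * cs.simple i) ^ n * cs.simple j then (-1 : ℤˣ) else 1)) = 1 := by
    have h2 : 2 * M i j = M i j + M i j := by ring
    rw [h2, Finset.prod_range_add]
    have : ∀ n ∈ Finset.range (M i j),
        (if t = (cs.simple j * cs.simple i) ^ (M i j + n) * cs.simple j then (-1 : ℤˣ) else 1)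
        = (if t = (cs.simple j * cs.simple i) ^ n * cs.simple j then (-1 : ℤˣ) else 1) := by
      intro n _
      rw [pow_add, hm, one_mul]
    rw [Finset.prod_congr rfl this]
    rcases Int.units_eq_one_or (∏ n ∈ Finset.range (M i j),
        (if t = (cs.simple j * cs.simple i) ^ n * cs.simple j then (-1 : ℤˣ) else 1)) with h | h <;>
      rw [h] <;> decide
  rw [cs.eta_mul_eta_pow i j (M i j) t ε, hm, hprod]
  simp

/-- The sign homomorphism into permutations of `W × ℤˣ`. -/
noncomputable def phi (cs : CoxeterSystem M W) : W →* Equiv.Perm (W × ℤˣ) :=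
  cs.lift ⟨cs.eta, cs.eta_liftable⟩

lemma phi_simple (cs : CoxeterSystem M W) (i : B) : cs.phi (cs.simple i) = cs.eta i :=
  cs.lift_apply_simple cs.eta_liftable i

open scoped Classical in
lemma phi_wordProd (cs : CoxeterSystem M W) (ω : List B) (t : W) (ε : ℤˣ) :
    cs.phi (cs.wordProd ω) (t, ε) =
      (cs.wordProd ω * t * (cs.wordProd ω)⁻¹,
        ε * ((cs.rightInvSeq ω).map (fun r => if t = r then (-1 : ℤˣ) else 1)).prod) := by
  induction ω with
  | nil => simp
  | cons i ω ih =>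
    rw [cs.wordProd_cons, map_mul, Equiv.Perm.mul_apply, ih, cs.phi_simple, cs.eta_apply]
    have hris : cs.rightInvSeq (i :: ω) =
        ((cs.wordProd ω)⁻¹ * cs.simple i * cs.wordProd ω) :: cs.rightInvSeq ω := rfl
    rw [hris, List.map_cons, List.prod_cons]
    simp only [Prod.mk.injEq]
    constructor
    · rw [mul_inv_rev, cs.inv_simple]
      simp only [← mul_assoc]
    · have hcond : cs.wordProd ω * t * (cs.wordProd ω)⁻¹ = cs.simple i ↔
          t = (cs.wordProd ω)⁻¹ * cs.simple i * cs.wordProd ω := by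
        have h := conj_eq_iff' ((cs.wordProd ω)⁻¹) t (cs.simple i)
        rw [inv_inv] at h
        exact h
      rw [hcond]
      split_ifs <;> simp [mul_comm, mul_left_comm, mul_assoc]

end CoxeterSystem

namespace CoxeterSystem

variable (cs : CoxeterSystem M W)

local prefix:100 "s" => cs.simple
local prefix:100 "π" => cs.wordProd
local prefix:100 "ℓ" => cs.length

/-- The sign of a reflection `t` relative to `w`. -/
noncomputable def sgn (w t : W) : ℤˣ := (cs.phi w (t, 1)).2

open scoped Classical in
lemma sgn_eq_prod (ω : List B) (t : W) :
    cs.sgn (π ω) t = ((cs.rightInvSeq ω).map (fun r => if t = r then (-1 : ℤˣ) else 1)).prod := by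
  rw [sgn, cs.phi_wordProd, one_mul]

lemma phi_apply' (w t : W) (ε : ℤˣ) :
    cs.phi w (t, ε) = (w * t * w⁻¹, ε * cs.sgn w t) := by
  obtain ⟨ω, rfl⟩ := cs.wordProd_surjective w
  rw [cs.phi_wordProd, cs.sgn_eq_prod]

lemma mem_rightInvSeq_of_sgn_neg {w t : W} (h : cs.sgn w t = -1) {ω : List B}
    (hω : π ω = w) : t ∈ cs.rightInvSeq ω := by
  classical
  by_contra hmem
  have : cs.sgn w t = 1 := by
    rw [← hω, cs.sgn_eq_prod]
    apply List.prod_eq_one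
    intro x hx
    obtain ⟨r, hr, rfl⟩ := List.mem_map.mp hx
    rw [if_neg]
    intro he
    exact hmem (he ▸ hr)
  rw [this] at h
  exact absurd h (by decide)

lemma sgn_self_of_isReflection {t : W} (ht : cs.IsReflection t) : cs.sgn t t = -1 := by
  obtain ⟨x, i, rfl⟩ := ht
  set t := x * s i * x⁻¹ with hts
  have hx1 : cs.phi x⁻¹ (t, 1) = (s i, cs.sgn x⁻¹ t) := by
    rw [cs.phi_apply', one_mul]
    congr 1
    rw [hts]
    group
  have hx2 : cs.phi x (s i, -cs.sgn x⁻¹ t) = (t, -(cs.sgn x⁻¹ t * cs.sgn x (s i))) := by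
    rw [cs.phi_apply']
    congr 1
    rw [neg_mul]
  have hinv : cs.sgn x⁻¹ t * cs.sgn x (s i) = 1 := by
    have h := congrArg (fun p => (cs.phi x p).2) hx1
    rw [← Equiv.Perm.mul_apply, ← map_mul, mul_inv_cancel, map_one, Equiv.Perm.one_apply] at h
    rw [cs.phi_apply'] at h
    simpa using h.symm
  have : cs.phi t (t, 1) = (t, -1) := by
    calc cs.phi t (t, 1) = cs.phi x (cs.phi (s i) (cs.phi x⁻¹ (t, 1))) := by
          rw [← Equiv.Perm.mul_apply, ← Equiv.Perm.mul_apply, ← map_mul, ← map_mul]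
      _ = cs.phi x (cs.eta i (s i, cs.sgn x⁻¹ t)) := by rw [hx1, cs.phi_simple]
      _ = cs.phi x (s i, -cs.sgn x⁻¹ t) := by
          rw [cs.eta_apply]
          simp [cs.simple_mul_simple_cancel_right]
      _ = (t, -(cs.sgn x⁻¹ t * cs.sgn x (s i))) := hx2
      _ = (t, -1) := by rw [hinv]
  rw [sgn, this]

lemma sgn_mul_reflection {w t : W} (ht : cs.IsReflection t) :
    cs.sgn (w * t) t = -cs.sgn w t := by
  have : cs.phi (w * t) (t, 1) = cs.phi w (cs.phi t (t, 1)) := by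
    rw [← Equiv.Perm.mul_apply, ← map_mul]
  have h2 : cs.phi t (t, 1) = (t, -1) := by
    rw [cs.phi_apply', cs.sgn_self_of_isReflection ht, one_mul, ht.mul_self, one_mul, ht.inv]
  rw [sgn, this, h2, cs.phi_apply']
  simp

end CoxeterSystem

namespace CoxeterSystem

variable (cs : CoxeterSystem M W)

local prefix:100 "s" => cs.simple
local prefix:100 "π" => cs.wordProd
local prefix:100 "ℓ" => cs.length

lemma isRightInversion_of_sgn_neg {w t : W} (ht : cs.IsReflection t)
    (h : cs.sgn w t = -1) : ℓ (w * t) < ℓ w := by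
  obtain ⟨ω, hred, hw⟩ := cs.exists_reduced_word' w
  have hmem : t ∈ cs.rightInvSeq ω := cs.mem_rightInvSeq_of_sgn_neg h hw.symm
  have := (cs.isRightInversion_of_mem_rightInvSeq hred hmem).2
  rwa [← hw] at this

lemma sgn_neg_of_isRightInversion {w t : W} (ht : cs.IsReflection t)
    (hl : ℓ (w * t) < ℓ w) : cs.sgn w t = -1 := by
  rcases Int.units_eq_one_or (cs.sgn w t) with h | h
  · exfalso
    have h1 : cs.sgn (w * t) t = -1 := by rw [cs.sgn_mul_reflection ht, h]
    have h2 := cs.isRightInversion_of_sgn_neg ht h1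
    rw [mul_assoc, ht.mul_self, mul_one] at h2
    omega
  · exact h

theorem strong_exchange {w t : W} (ht : cs.IsReflection t) (hl : ℓ (w * t) < ℓ w)
    {ω : List B} (hω : π ω = w) : ∃ j < ω.length, w * t = π (ω.eraseIdx j) := by
  have hmem : t ∈ cs.rightInvSeq ω :=
    cs.mem_rightInvSeq_of_sgn_neg (cs.sgn_neg_of_isRightInversion ht hl) hω
  obtain ⟨j, hj, heq⟩ := List.mem_iff_getElem.mp hmem
  rw [cs.length_rightInvSeq] at hj
  refine ⟨j, hj, ?_⟩
  rw [← hω, ← cs.wordProd_mul_getD_rightInvSeq ω j]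
  congr 1
  rw [List.getD_eq_getElem _ _ (by rwa [cs.length_rightInvSeq]), heq]

end CoxeterSystem

/-- An edge of the Bruhat graph: `v = u * t` for a reflection `t`, with `ℓ(u) < ℓ(v)`. -/
def BruhatEdge (cs : CoxeterSystem M W) (u v : W) : Prop :=
  ∃ t : W, cs.IsReflection t ∧ v = u * t ∧ cs.length u < cs.length v

/-- The Bruhat order on a Coxeter group. -/
def BruhatLE (cs : CoxeterSystem M W) : W → W → Prop :=
  Relation.ReflTransGen (BruhatEdge cs)

namespace CoxeterSystem

variable (cs : CoxeterSystem M W)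

local prefix:100 "s" => cs.simple
local prefix:100 "π" => cs.wordProd
local prefix:100 "ℓ" => cs.length

lemma bruhatEdge_of_left {u v t : W} (ht : cs.IsReflection t) (hv : v = t * u)
    (hl : ℓ u < ℓ v) : BruhatEdge cs u v := by
  refine ⟨u⁻¹ * t * u, ?_, ?_, hl⟩
  · have := ht.conj u⁻¹
    rwa [inv_inv] at this
  · rw [hv, ← mul_assoc, ← mul_assoc, mul_inv_cancel, one_mul]

lemma bruhatLE_refl (u : W) : BruhatLE cs u u := Relation.ReflTransGen.refl

lemma bruhatLE_trans {u v w : W} (h1 : BruhatLE cs u v) (h2 : BruhatLE cs v w) :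
    BruhatLE cs u w := Relation.ReflTransGen.trans h1 h2

lemma length_le_of_bruhatLE {u v : W} (h : BruhatLE cs u v) : ℓ u ≤ ℓ v := by
  induction h with
  | refl => exact le_refl _
  | tail _ hedge ih =>
    obtain ⟨t, _, _, hlt⟩ := hedge
    omega

lemma length_lt_of_bruhatLE_ne {u v : W} (h : BruhatLE cs u v) (hne : u ≠ v) :
    ℓ u < ℓ v := by
  rcases Relation.ReflTransGen.cases_tail h with h' | ⟨c, hc, hedge⟩
  · exact absurd h'.symm hne
  · obtain ⟨t, _, _, hlt⟩ := hedge
    have := cs.length_le_of_bruhatLE hc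
    omega

lemma le_simple_mul {w : W} (i : B) (h : ℓ w < ℓ (s i * w)) :
    BruhatLE cs w (s i * w) :=
  Relation.ReflTransGen.single (cs.bruhatEdge_of_left (cs.isReflection_simple i) rfl h)

lemma simple_mul_le {w : W} (i : B) (h : ℓ (s i * w) < ℓ w) :
    BruhatLE cs (s i * w) w :=
  Relation.ReflTransGen.single (cs.bruhatEdge_of_left (cs.isReflection_simple i)
    (cs.simple_mul_simple_cancel_left i).symm h)

/-- The two dichotomies for a simple times an element. -/
lemma length_smul_cases (i : B) (w : W) :
    ℓ (s i * w) = ℓ w + 1 ∨ ℓ (s i * w) + 1 = ℓ w := cs.length_simple_mul w i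

/-- Edge lifting lemma: if `w → z` is a Bruhat edge, `s i` is a left descent of `z` but a
left ascent of `w`, then `s i * w ≤ z` and `w ≤ s i * z`. -/
lemma edge_lift (i : B) {w z t : W} (ht : cs.IsReflection t) (hz : z = w * t)
    (hwz : ℓ w < ℓ z) (hsz : ℓ (s i * z) < ℓ z) (hsw : ℓ w < ℓ (s i * w)) :
    BruhatLE cs (s i * w) z ∧ BruhatLE cs w (s i * z) := by
  have hsw1 : ℓ (s i * w) = ℓ w + 1 := by
    rcases cs.length_smul_cases i w with h | h <;> omega
  have hsz1 : ℓ (s i * z) + 1 = ℓ z := by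
    rcases cs.length_smul_cases i z with h | h <;> omega
  have hszt : s i * z = (s i * w) * t := by rw [hz, mul_assoc]
  have hne : ℓ (s i * z) ≠ ℓ (s i * w) := by
    rw [hszt]; exact ht.length_mul_left_ne (s i * w)
  rcases Nat.lt_or_ge (ℓ (s i * w)) (ℓ (s i * z)) with hlt | hge
  · -- easy case: edge s i * w → s i * z
    have hedge : BruhatEdge cs (s i * w) (s i * z) := ⟨t, ht, hszt, hlt⟩
    constructor
    · exact (Relation.ReflTransGen.single hedge).trans (cs.simple_mul_le i hsz)
    · exact (cs.le_simple_mul i hsw).trans (Relation.ReflTransGen.single hedge)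
  · -- hard case: show w = s i * z using strong exchange
    have hlen : ℓ (s i * z) = ℓ w := by omega
    obtain ⟨τ, hτlen, hτ⟩ := cs.exists_reduced_word (s i * z)
    have hπ : π (i :: τ) = z := by
      rw [cs.wordProd_cons, ← hτ, cs.simple_mul_simple_cancel_left]
    have hzt : ℓ (z * t) < ℓ z := by
      rw [hz, mul_assoc, ht.mul_self, mul_one, ← hz]; exact hwz
    obtain ⟨j, hj, hjw⟩ := cs.strong_exchange ht hzt hπ
    rw [hz, mul_assoc, ht.mul_self, mul_one] at hjw
    -- hjw : w = π ((i :: τ).eraseIdx j)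
    match j, hj with
    | 0, _ =>
      rw [List.eraseIdx_cons_zero, ← hτ] at hjw
      -- w = s i * z
      have h1 : s i * w = z := by rw [hjw, cs.simple_mul_simple_cancel_left]
      rw [h1, ← hjw]
      exact ⟨cs.bruhatLE_refl z, cs.bruhatLE_refl w⟩
    | (j' + 1), hj =>
      exfalso
      rw [List.eraseIdx_cons_succ] at hjw
      have h2 : s i * w = π (τ.eraseIdx j') := by
        rw [hjw, cs.wordProd_cons, cs.simple_mul_simple_cancel_left]
      have h3 : ℓ (s i * w) ≤ (τ.eraseIdx j').length := h2 ▸ cs.length_wordProd_le _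
      have h4 : j' < τ.length := by simpa using hj
      have h5 : (τ.eraseIdx j').length = τ.length - 1 := by
        rw [List.length_eraseIdx]; simp [h4]
      have h6 : ℓ (s i * z) = τ.length := by rw [hτ]; exact hτlen
      omega

end CoxeterSystem

namespace CoxeterSystem

variable (cs : CoxeterSystem M W)

local prefix:100 "s" => cs.simple
local prefix:100 "π" => cs.wordProd
local prefix:100 "ℓ" => cs.length

/-- The lifting property of the Bruhat order. -/
lemma lifting (i : B) {x z : W} (h : BruhatLE cs x z) :
    (ℓ (s i * z) < ℓ z →
       BruhatLE cs (s i * x) z ∧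
       (ℓ (s i * x) < ℓ x → BruhatLE cs (s i * x) (s i * z)) ∧
       (ℓ x < ℓ (s i * x) → BruhatLE cs x (s i * z)))
    ∧ (ℓ z < ℓ (s i * z) → BruhatLE cs (s i * x) (s i * z)) := by
  induction h with
  | refl =>
    constructor
    · intro hx
      exact ⟨cs.simple_mul_le i hx, fun _ => cs.bruhatLE_refl _,
        fun hx2 => (Nat.lt_asymm hx hx2).elim⟩
    · intro _
      exact cs.bruhatLE_refl _
  | @tail w z hxw hedge ih =>
    obtain ⟨t, ht, hz, hwz⟩ := hedge
    constructor
    · intro hsz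
      rcases Nat.lt_or_ge (ℓ (s i * w)) (ℓ w) with hw | hw'
      · obtain ⟨hA, hB, hC⟩ := ih.1 hw
        have hedge_sw : BruhatEdge cs (s i * w) (s i * z) := by
          refine ⟨t, ht, by rw [hz, mul_assoc], ?_⟩
          have d1 := cs.length_smul_cases i w
          have d2 := cs.length_smul_cases i z
          omega
        exact ⟨hA.trans (Relation.ReflTransGen.single ⟨t, ht, hz, hwz⟩),
          fun hx => (hB hx).trans (Relation.ReflTransGen.single hedge_sw),
          fun hx => (hC hx).trans (Relation.ReflTransGen.single hedge_sw)⟩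
      · have hw2 : ℓ w < ℓ (s i * w) := by
          have := cs.length_simple_mul_ne w i; omega
        have hZ := ih.2 hw2
        obtain ⟨hswz, hwsz⟩ := cs.edge_lift i ht hz hwz hsz hw2
        exact ⟨hZ.trans hswz,
          fun hx => ((cs.simple_mul_le i hx).trans hxw).trans hwsz,
          fun _ => hxw.trans hwsz⟩
    · intro hsz
      rcases Nat.lt_or_ge (ℓ (s i * w)) (ℓ w) with hw | hw'
      · have hA := (ih.1 hw).1
        exact hA.trans ((Relation.ReflTransGen.single ⟨t, ht, hz, hwz⟩).trans
          (cs.le_simple_mul i hsz))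
      · have hw2 : ℓ w < ℓ (s i * w) := by
          have := cs.length_simple_mul_ne w i; omega
        have hZ := ih.2 hw2
        have hedge_sw : BruhatEdge cs (s i * w) (s i * z) := by
          refine ⟨t, ht, by rw [hz, mul_assoc], ?_⟩
          have d1 := cs.length_smul_cases i w
          have d2 := cs.length_smul_cases i z
          omega
        exact hZ.trans (Relation.ReflTransGen.single hedge_sw)

end CoxeterSystem

namespace CoxeterSystem

variable (cs : CoxeterSystem M W)

local prefix:100 "s" => cs.simple
local prefix:100 "ℓ" => cs.length

lemma alt_sum (hfin : ∀ u v : W, {w | BruhatLE cs u w ∧ BruhatLE cs w v}.Finite) :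
    ∀ n : ℕ, ∀ u v : W, ℓ v = n → BruhatLE cs u v → u ≠ v →
      ∑ w ∈ (hfin u v).toFinset, (-1 : ℤ) ^ (ℓ w) = 0 := by
  intro n
  induction n using Nat.strong_induction_on with
  | _ n ih =>
  intro u v hn huv hne
  classical
  have hlt : ℓ u < ℓ v := cs.length_lt_of_bruhatLE_ne huv hne
  have hv1 : v ≠ 1 := by
    intro h
    rw [h, cs.length_one] at hlt
    omega
  obtain ⟨i, hsv⟩ := cs.exists_leftDescent_of_ne_one hv1
  have hsv : ℓ (s i * v) < ℓ v := hsv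
  have mem_iff : ∀ (a b w : W), w ∈ (hfin a b).toFinset ↔
      BruhatLE cs a w ∧ BruhatLE cs w b := by
    intro a b w
    rw [Set.Finite.mem_toFinset]
    rfl
  have cancel : ∀ w : W, s i * (s i * w) = w := fun w => cs.simple_mul_simple_cancel_left i
  have hsign : ∀ w : W, (-1 : ℤ) ^ ℓ (s i * w) = -(-1 : ℤ) ^ ℓ w := by
    intro w
    rcases cs.length_smul_cases i w with h | h
    · rw [h, pow_succ]; ring
    · rw [← h, pow_succ]; ring
  rcases Nat.lt_or_ge (ℓ u) (ℓ (s i * u)) with hu | hu'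
  · -- ascent case at u : full pairing
    apply Finset.sum_involution (fun w _ => s i * w)
    · intro w _
      rw [hsign w]
      ring
    · intro w _ _
      have := cs.length_simple_mul_ne w i
      intro hcontra
      exact this (by rw [hcontra])
    · intro w hw
      rw [mem_iff] at hw ⊢
      obtain ⟨h1, h2⟩ := hw
      rcases Nat.lt_or_ge (ℓ (s i * w)) (ℓ w) with hsw | hsw'
      · exact ⟨((cs.lifting i h1).1 hsw).2.2 hu, (cs.simple_mul_le i hsw).trans h2⟩
      · have hsw2 : ℓ w < ℓ (s i * w) := by
          have := cs.length_simple_mul_ne w i; omega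
        exact ⟨h1.trans (cs.le_simple_mul i hsw2), ((cs.lifting i h2).1 hsv).1⟩
    · intro w _
      exact cancel w
  · -- descent case at u
    have hu2 : ℓ (s i * u) < ℓ u := by
      have := cs.length_simple_mul_ne u i; omega
    have hsu_le_u : BruhatLE cs (s i * u) u := cs.simple_mul_le i hu2
    have hsv_le_v : BruhatLE cs (s i * v) v := cs.simple_mul_le i hsv
    set F := (hfin u v).toFinset with hF
    set G := (hfin (s i * u) (s i * v)).toFinset with hG
    set H := (hfin u (s i * v)).toFinset with hH
    -- step 2 : sum over descents of F = - sum over ascents of G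
    have e2 : ∑ w ∈ F.filter (fun w => ¬ ℓ w < ℓ (s i * w)), (-1 : ℤ) ^ (ℓ w)
        = ∑ x ∈ G.filter (fun w => ℓ w < ℓ (s i * w)), -((-1 : ℤ) ^ (ℓ x)) := by
      apply Finset.sum_nbij' (fun w => s i * w) (fun x => s i * x)
      · intro w hw
        rw [Finset.mem_filter] at hw ⊢
        obtain ⟨hwF, hnP⟩ := hw
        rw [hF, mem_iff] at hwF
        obtain ⟨h1, h2⟩ := hwF
        have hsw : ℓ (s i * w) < ℓ w := by
          have := cs.length_simple_mul_ne w i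
          omega
        refine ⟨?_, ?_⟩
        · rw [hG, mem_iff]
          exact ⟨((cs.lifting i h1).1 hsw).2.1 hu2, ((cs.lifting i h2).1 hsv).2.1 hsw⟩
        · rw [cancel w]
          exact hsw
      · intro x hx
        rw [Finset.mem_filter] at hx ⊢
        obtain ⟨hxG, hPx⟩ := hx
        rw [hG, mem_iff] at hxG
        obtain ⟨h1, h2⟩ := hxG
        refine ⟨?_, ?_⟩
        · rw [hF, mem_iff]
          constructor
          · have := (cs.lifting i h1).2 hPx
            rwa [cancel u] at this
          · have hsv2 : ℓ (s i * v) < ℓ (s i * (s i * v)) := by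
              rw [cancel v]; exact hsv
            have := (cs.lifting i h2).2 hsv2
            rwa [cancel v] at this
        · rw [cancel x]
          omega
      · intro w _; exact cancel w
      · intro x _; exact cancel x
      · intro w _
        rw [hsign w]
        ring
    -- step 3 : ascents of F = ascents of G that dominate u
    have e3 : F.filter (fun w => ℓ w < ℓ (s i * w)) =
        (G.filter (fun w => ℓ w < ℓ (s i * w))).filter (fun x => BruhatLE cs u x) := by
      ext x
      simp only [Finset.mem_filter, hF, hG, mem_iff]
      constructor
      · rintro ⟨⟨h1, h2⟩, hPx⟩
        exact ⟨⟨⟨hsu_le_u.trans h1, ((cs.lifting i h2).1 hsv).2.2 hPx⟩, hPx⟩, h1⟩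
      · rintro ⟨⟨⟨h1, h2⟩, hPx⟩, h3⟩
        exact ⟨⟨h3, h2.trans hsv_le_v⟩, hPx⟩
    -- step 4
    have e4 : (G.filter (fun w => ℓ w < ℓ (s i * w))).filter (fun x => ¬ BruhatLE cs u x) =
        G.filter (fun x => ¬ BruhatLE cs u x) := by
      ext x
      simp only [Finset.mem_filter, hG, mem_iff]
      constructor
      · rintro ⟨⟨hx, _⟩, hnu⟩
        exact ⟨hx, hnu⟩
      · rintro ⟨⟨h1, h2⟩, hnu⟩
        refine ⟨⟨⟨h1, h2⟩, ?_⟩, hnu⟩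
        by_contra hnP
        have hsx : ℓ (s i * x) < ℓ x := by
          have := cs.length_simple_mul_ne x i; omega
        have := ((cs.lifting i h1).1 hsx).1
        rw [cancel u] at this
        exact hnu this
    -- step 5
    have e5 : G.filter (fun x => BruhatLE cs u x) = H := by
      ext x
      simp only [Finset.mem_filter, hG, hH, mem_iff]
      constructor
      · rintro ⟨⟨h1, h2⟩, h3⟩
        exact ⟨h3, h2⟩
      · rintro ⟨h1, h2⟩
        exact ⟨⟨hsu_le_u.trans h1, h2⟩, h1⟩
    -- inductive hypotheses
    have hGsum : ∑ w ∈ G, (-1 : ℤ) ^ (ℓ w) = 0 := by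
      apply ih (ℓ (s i * v)) (by omega) (s i * u) (s i * v) rfl
      · exact ((cs.lifting i huv).1 hsv).2.1 hu2
      · intro hEq
        exact hne (mul_left_cancel hEq)
    have hHsum : ∑ w ∈ H, (-1 : ℤ) ^ (ℓ w) = 0 := by
      by_cases husv : BruhatLE cs u (s i * v)
      · apply ih (ℓ (s i * v)) (by omega) u (s i * v) rfl husv
        intro hEq
        have hc1 : ℓ (s i * u) = ℓ v := by rw [hEq, cancel v]
        have hc2 : ℓ u = ℓ (s i * v) := by rw [hEq]
        omega
      · have hemp : H = ∅ := by
          apply Finset.eq_empty_of_forall_notMem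
          intro w hw
          rw [hH, mem_iff] at hw
          exact husv (hw.1.trans hw.2)
        rw [hemp, Finset.sum_empty]
    -- assemble
    have a1 : ∑ w ∈ F, (-1 : ℤ) ^ (ℓ w)
        = ∑ w ∈ F.filter (fun w => ℓ w < ℓ (s i * w)), (-1 : ℤ) ^ (ℓ w)
        + ∑ w ∈ F.filter (fun w => ¬ ℓ w < ℓ (s i * w)), (-1 : ℤ) ^ (ℓ w) :=
      (Finset.sum_filter_add_sum_filter_not F _ _).symm
    have a2 : ∑ w ∈ G.filter (fun w => ℓ w < ℓ (s i * w)), (-1 : ℤ) ^ (ℓ w)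
        = ∑ w ∈ (G.filter (fun w => ℓ w < ℓ (s i * w))).filter (fun x => BruhatLE cs u x),
            (-1 : ℤ) ^ (ℓ w)
        + ∑ w ∈ (G.filter (fun w => ℓ w < ℓ (s i * w))).filter (fun x => ¬ BruhatLE cs u x),
            (-1 : ℤ) ^ (ℓ w) :=
      (Finset.sum_filter_add_sum_filter_not _ _ _).symm
    have a3 : ∑ w ∈ G, (-1 : ℤ) ^ (ℓ w)
        = ∑ w ∈ G.filter (fun x => BruhatLE cs u x), (-1 : ℤ) ^ (ℓ w)
        + ∑ w ∈ G.filter (fun x => ¬ BruhatLE cs u x), (-1 : ℤ) ^ (ℓ w) :=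
      (Finset.sum_filter_add_sum_filter_not G _ _).symm
    rw [e4, ← e3] at a2
    rw [e5] at a3
    rw [Finset.sum_neg_distrib] at e2
    rw [hGsum] at a3
    rw [hHsum] at a3
    linarith [a1, a2, a3, e2]

end CoxeterSystem

/-- The Möbius function of the Bruhat order is `μ(u,v) = (-1)^{ℓ(v)-ℓ(u)}`. -/
theorem bruhat_moebius (cs : CoxeterSystem M W)
    (hfin : ∀ u v : W, {w | BruhatLE cs u w ∧ BruhatLE cs w v}.Finite)
    (mu : W → W → ℤ)
    (hmu1 : ∀ u, mu u u = 1)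
    (hmu2 : ∀ u v, BruhatLE cs u v → u ≠ v → ∑ w ∈ (hfin u v).toFinset, mu u w = 0)
    (u v : W) (huv : BruhatLE cs u v) :
    mu u v = (-1 : ℤ) ^ (cs.length v - cs.length u) := by
  classical
  suffices h : ∀ n : ℕ, ∀ v : W, cs.length v = n → BruhatLE cs u v →
      mu u v = (-1 : ℤ) ^ (cs.length v - cs.length u) from h _ v rfl huv
  intro n
  induction n using Nat.strong_induction_on with
  | _ n ih =>
  intro v hn huv
  by_cases hne : u = v
  · subst hne
    simp [hmu1 u]
  · have hkey := hmu2 u v huv hne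
    have hvF : v ∈ (hfin u v).toFinset := by
      rw [Set.Finite.mem_toFinset]
      exact ⟨huv, Relation.ReflTransGen.refl⟩
    have hsplit := (Finset.add_sum_erase _ (fun w => mu u w) hvF).symm
    have hIH : ∀ w ∈ (hfin u v).toFinset.erase v,
        mu u w = (-1 : ℤ) ^ (cs.length w - cs.length u) := by
      intro w hw
      obtain ⟨hwne, hwF⟩ := Finset.mem_erase.mp hw
      rw [Set.Finite.mem_toFinset] at hwF
      obtain ⟨h1, h2⟩ := hwF
      exact ih (cs.length w)
        (by have := cs.length_lt_of_bruhatLE_ne h2 hwne; omega) w rfl h1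
    have hpow : ∀ a b : ℕ, a ≤ b → ((-1 : ℤ)) ^ (b - a) = (-1) ^ a * (-1) ^ b := by
      intro a b hab
      have h : (-1 : ℤ) ^ b = (-1 : ℤ) ^ a * (-1 : ℤ) ^ (b - a) := by
        rw [← pow_add, Nat.add_sub_cancel' hab]
      rw [h, ← mul_assoc, ← pow_add, ← two_mul, pow_mul]
      norm_num
    have hSum : ∑ w ∈ (hfin u v).toFinset, (-1 : ℤ) ^ (cs.length w - cs.length u) = 0 := by
      have hcong : ∀ w ∈ (hfin u v).toFinset, (-1 : ℤ) ^ (cs.length w - cs.length u)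
          = (-1 : ℤ) ^ (cs.length u) * (-1 : ℤ) ^ (cs.length w) := by
        intro w hw
        rw [Set.Finite.mem_toFinset] at hw
        exact hpow _ _ (cs.length_le_of_bruhatLE hw.1)
      rw [Finset.sum_congr rfl hcong, ← Finset.mul_sum,
        cs.alt_sum hfin (cs.length v) u v rfl huv hne, mul_zero]
    have hErase := (Finset.add_sum_erase _
      (fun w => (-1 : ℤ) ^ (cs.length w - cs.length u)) hvF).symm
    rw [Finset.sum_congr rfl hIH] at hsplit
    rw [hkey] at hsplit
    rw [hSum] at hErase
    linarith [hsplit, hErase]
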